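/- Let A = (a_{ij}) be an n×n integer matrix with a_{jj} = 1 for all j and such that every 2×2 principal minor of A equals ±1 (i.e., 1 − a_{ij}·a_{ji} = ±1 for all i ≠ j). Let ε_{ji} (1 ≤ i < j ≤ n) be integers and f_j = ∑_{i<j} ε_{ji}·x_i. If there exists a ring isomorphism between ℤ[x₁,…,x_n]/⟨x_j(x_j − f_j) : j⟩ and R_A = ℤ[y₁,…,y_n]/⟨y_j·(∑_{i=1}^n a_{ji}·y_i) : j⟩ carrying the ℤ-span of the generators x₁,…,x_n onto the ℤ-span of the generators y₁,…,y_n, then a_{ij}·a_{ji} = 0 for all i ≠ j. -/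
import Mathlib


open MvPolynomial

set_option maxHeartbeats 1000000
set_option synthInstance.maxHeartbeats 400000

/-- `f j = ∑_{i < j} ε j i • x i`, the twisting class of the `j`-th stage. -/
noncomputable def bottF (n : ℕ) (ε : Fin n → Fin n → ℤ) (j : Fin n) :
    MvPolynomial (Fin n) ℤ :=
  ∑ i : Fin n, if i < j then C (ε j i) * X i else 0

/-- The defining ideal `⟨x_j (x_j - f_j) : j⟩` of the Bott ring. -/
noncomputable def bottIdeal (n : ℕ) (ε : Fin n → Fin n → ℤ) :
    Ideal (MvPolynomial (Fin n) ℤ) :=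
  Ideal.span (Set.range fun j : Fin n => X j * (X j - bottF n ε j))

/-- The defining ideal `⟨y_j · (∑ i, a_{ji} y_i) : j⟩` of the cohomology ring `R_A` of a
quasitoric manifold over a cube with characteristic data `A`. -/
noncomputable def quasiIdeal (n : ℕ) (A : Matrix (Fin n) (Fin n) ℤ) :
    Ideal (MvPolynomial (Fin n) ℤ) :=
  Ideal.span (Set.range fun j : Fin n => X j * ∑ i : Fin n, C (A j i) * X i)

namespace Stmt9Aux

noncomputable def lin (n : ℕ) (v : Fin n → ℤ) : MvPolynomial (Fin n) ℤ :=
  ∑ i, C (v i) * X i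

noncomputable def Phi (n : ℕ) (z : Fin n → ℤ) : MvPolynomial (Fin n) ℤ →+* Polynomial ℤ :=
  (aeval fun i => Polynomial.C (z i) * Polynomial.X).toRingHom

lemma Phi_X (n : ℕ) (z : Fin n → ℤ) (i : Fin n) :
    Phi n z (X i) = Polynomial.C (z i) * Polynomial.X := by
  simp [Phi]

lemma Phi_C (n : ℕ) (z : Fin n → ℤ) (a : ℤ) : Phi n z (C a) = Polynomial.C a := by
  simp [Phi, algebraMap_int_eq, Polynomial.C_eq_intCast]

lemma Phi_lin (n : ℕ) (z v : Fin n → ℤ) :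
    Phi n z (lin n v) = Polynomial.C (∑ i, v i * z i) * Polynomial.X := by
  rw [lin, map_sum, map_sum, Finset.sum_mul]
  refine Finset.sum_congr rfl fun i _ => ?_
  rw [map_mul, Phi_C, Phi_X, map_mul]
  ring

lemma eval0_Phi (n : ℕ) (z : Fin n → ℤ) (p : MvPolynomial (Fin n) ℤ) :
    Polynomial.eval 0 (Phi n z p) = eval (fun _ => (0:ℤ)) p := by
  induction p using MvPolynomial.induction_on with
  | C a => rw [Phi_C]; simp
  | add p q hp hq => rw [map_add, map_add]; simp [hp, hq]
  | mul_X p i hp => rw [map_mul, Phi_X]; simp [hp]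

lemma key (n : ℕ) (A : Matrix (Fin n) (Fin n) ℤ) (v w : Fin n → ℤ)
    (hmem : lin n v * lin n w ∈ quasiIdeal n A) :
    ∃ c : Fin n → ℤ, ∀ z : Fin n → ℤ,
      (∑ i, v i * z i) * (∑ i, w i * z i) = ∑ k, c k * (z k * ∑ i, A k i * z i) := by
  rw [quasiIdeal, Ideal.mem_span_range_iff_exists_fun] at hmem
  obtain ⟨h, hh⟩ := hmem
  refine ⟨fun k => eval (fun _ => (0:ℤ)) (h k), fun z => ?_⟩
  have H0 := congrArg (Phi n z) hh
  rw [map_sum] at H0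
  have H := congrArg (fun p => Polynomial.coeff p 2) H0
  simp only [Polynomial.finset_sum_coeff] at H
  have lhs : (Phi n z (lin n v * lin n w)).coeff 2
      = (∑ i, v i * z i) * (∑ i, w i * z i) := by
    rw [map_mul, Phi_lin, Phi_lin,
      show Polynomial.C (∑ i, v i * z i) * Polynomial.X *
          (Polynomial.C (∑ i, w i * z i) * Polynomial.X)
        = Polynomial.C ((∑ i, v i * z i) * (∑ i, w i * z i)) * Polynomial.X ^ 2 by
        rw [map_mul]; ring]
    rw [Polynomial.coeff_C_mul, Polynomial.coeff_X_pow]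
    simp
  have rhs : ∀ k : Fin n, (Phi n z (h k * (X k * ∑ i, C (A k i) * X i))).coeff 2
      = eval (fun _ => (0:ℤ)) (h k) * (z k * ∑ i, A k i * z i) := by
    intro k
    rw [map_mul, map_mul]
    have : Phi n z (X k) * Phi n z (∑ i, C (A k i) * X i)
        = Polynomial.C (z k * (∑ i, A k i * z i)) * Polynomial.X ^ 2 := by
      rw [Phi_X, show (∑ i, C (A k i) * X i) = lin n (A k) from rfl, Phi_lin, map_mul]
      ring
    rw [this, show Phi n z (h k) * (Polynomial.C (z k * (∑ i, A k i * z i)) * Polynomial.X ^ 2)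
        = Phi n z (h k) * Polynomial.C (z k * (∑ i, A k i * z i)) * Polynomial.X ^ 2 by ring,
      show (2:ℕ) = 0 + 2 from rfl, Polynomial.coeff_mul_X_pow, Polynomial.coeff_mul_C,
      Polynomial.coeff_zero_eq_eval_zero, eval0_Phi]
  rw [lhs] at H
  rw [← H]
  exact Finset.sum_congr rfl fun k _ => rhs k

lemma key1 (n : ℕ) (A : Matrix (Fin n) (Fin n) ℤ) (u : Fin n → ℤ)
    (hmem : lin n u ∈ quasiIdeal n A) : ∀ i, u i = 0 := by
  rw [quasiIdeal, Ideal.mem_span_range_iff_exists_fun] at hmem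
  obtain ⟨h, hh⟩ := hmem
  have H : ∀ z : Fin n → ℤ, (∑ i, u i * z i) = 0 := by
    intro z
    have H0 := congrArg (Phi n z) hh
    rw [map_sum] at H0
    have H := congrArg (fun p => Polynomial.coeff p 1) H0
    simp only [Polynomial.finset_sum_coeff] at H
    have lhs : (Phi n z (lin n u)).coeff 1 = ∑ i, u i * z i := by
      rw [Phi_lin, Polynomial.coeff_C_mul]; simp
    have rhs : ∀ k : Fin n, (Phi n z (h k * (X k * ∑ i, C (A k i) * X i))).coeff 1 = 0 := by
      intro k
      rw [map_mul, map_mul]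
      have : Phi n z (X k) * Phi n z (∑ i, C (A k i) * X i)
          = Polynomial.C (z k * (∑ i, A k i * z i)) * Polynomial.X ^ 2 := by
        rw [Phi_X, show (∑ i, C (A k i) * X i) = lin n (A k) from rfl, Phi_lin, map_mul]
        ring
      rw [this, show Phi n z (h k) * (Polynomial.C (z k * (∑ i, A k i * z i)) * Polynomial.X ^ 2)
          = Phi n z (h k) * Polynomial.C (z k * (∑ i, A k i * z i)) * Polynomial.X ^ 2 by ring,
        Polynomial.coeff_mul_X_pow']
      simp
    rw [lhs] at H
    rw [← H]
    exact Finset.sum_eq_zero fun k _ => rhs k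
  intro i
  have := H (fun t => if t = i then 1 else 0)
  simpa [mul_ite, Finset.sum_ite_eq'] using this

end Stmt9Aux

namespace Stmt9Aux

variable {n : ℕ}

lemma lin_sub (n : ℕ) (a b : Fin n → ℤ) :
    lin n (fun t => a t - b t) = lin n a - lin n b := by
  simp [lin, sub_mul, Finset.sum_sub_distrib, map_sub]

lemma lin_single (n : ℕ) (j : Fin n) :
    lin n (fun t => if t = j then 1 else 0) = X j := by
  rw [lin]
  rw [Finset.sum_eq_single j] <;> simp +contextual

lemma mk_lin (I : Ideal (MvPolynomial (Fin n) ℤ)) (c : Fin n → ℤ) :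
    Ideal.Quotient.mk I (lin n c)
      = ∑ k, (c k : MvPolynomial (Fin n) ℤ ⧸ I) * Ideal.Quotient.mk I (X k) := by
  rw [lin, map_sum]
  refine Finset.sum_congr rfl fun k _ => ?_
  rw [map_mul, eq_intCast (C : ℤ →+* MvPolynomial (Fin n) ℤ) (c k), map_intCast]

lemma lin_combo (n : ℕ) (u : Fin n → ℤ) (M : Fin n → Fin n → ℤ) :
    ∑ k, C (u k) * lin n (M k) = lin n (fun t => ∑ k, u k * M k t) := by
  simp only [lin, Finset.mul_sum]
  rw [Finset.sum_comm]
  refine Finset.sum_congr rfl fun t _ => ?_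
  rw [map_sum, Finset.sum_mul]
  refine Finset.sum_congr rfl fun k _ => ?_
  rw [map_mul]; ring

lemma bottF_eq (n : ℕ) (ε : Fin n → Fin n → ℤ) (j : Fin n) :
    bottF n ε j = lin n (fun i => if i < j then ε j i else 0) := by
  rw [bottF, lin]
  refine Finset.sum_congr rfl fun i _ => ?_
  split_ifs <;> simp

end Stmt9Aux

open Stmt9Aux

/-- If `A` is an integer matrix with unit diagonal all of whose `2 × 2` principal minors are
`±1`, and `R_A` is isomorphic to a Bott ring by a ring isomorphism carrying the ℤ-span of the
degree-two generators onto the ℤ-span of the degree-two generators, then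
`a_{ij} a_{ji} = 0` for all `i ≠ j`. -/
theorem stmt9 (n : ℕ) (A : Matrix (Fin n) (Fin n) ℤ)
    (hdiag : ∀ j, A j j = 1)
    (hminor : ∀ i j : Fin n, i ≠ j → 1 - A i j * A j i = 1 ∨ 1 - A i j * A j i = -1)
    (ε : Fin n → Fin n → ℤ)
    (hiso : ∃ ψ : (MvPolynomial (Fin n) ℤ ⧸ bottIdeal n ε) ≃+*
        (MvPolynomial (Fin n) ℤ ⧸ quasiIdeal n A),
      Submodule.map (ψ : (MvPolynomial (Fin n) ℤ ⧸ bottIdeal n ε) →+*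
            (MvPolynomial (Fin n) ℤ ⧸ quasiIdeal n A)).toIntAlgHom.toLinearMap
          (Submodule.span ℤ
            (Set.range fun i : Fin n => Ideal.Quotient.mk (bottIdeal n ε) (X i))) =
        Submodule.span ℤ
          (Set.range fun i : Fin n => Ideal.Quotient.mk (quasiIdeal n A) (X i))) :
    ∀ i j : Fin n, i ≠ j → A i j * A j i = 0 := by
  intro p q hpq
  rcases hminor p q hpq with hm | hm
  · omega
  have hbad : A p q * A q p = 2 := by omega
  exfalso
  obtain ⟨ψ, hspan⟩ := hiso
  set mkB := Ideal.Quotient.mk (bottIdeal n ε) with hmkB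
  set mkA := Ideal.Quotient.mk (quasiIdeal n A) with hmkA
  -- images of generators
  have hmem : ∀ j : Fin n, ψ (mkB (X j)) ∈
      Submodule.span ℤ (Set.range fun i : Fin n => mkA (X i)) := by
    intro j
    rw [← hspan]
    exact Submodule.mem_map_of_mem
      (Submodule.subset_span (Set.mem_range_self j))
  have hmem' : ∀ j : Fin n, ∃ g : Fin n → ℤ, ψ (mkB (X j)) = mkA (lin n g) := by
    intro j
    obtain ⟨g, hg⟩ := (Submodule.mem_span_range_iff_exists_fun ℤ).mp (hmem j)
    refine ⟨g, ?_⟩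
    rw [mk_lin, ← hg]
    refine Finset.sum_congr rfl fun k _ => ?_
    rw [zsmul_eq_mul]
  choose G hG using hmem'
  -- ψ of mkB (lin u) in terms of G
  have psimk : ∀ u : Fin n → ℤ,
      ψ (mkB (lin n u)) = mkA (lin n (fun t => ∑ k, u k * G k t)) := by
    intro u
    rw [mk_lin, map_sum, ← lin_combo, map_sum]
    refine Finset.sum_congr rfl fun k _ => ?_
    rw [map_mul, map_intCast, map_mul, eq_intCast (C : ℤ →+* MvPolynomial (Fin n) ℤ) (u k),
      map_intCast, hG k]
  -- the transported Bott relations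
  have hrel : ∀ j : Fin n,
      lin n (G j) * lin n (fun t => G j t - ∑ i, (if i < j then ε j i * G i t else 0))
        ∈ quasiIdeal n A := by
    intro j
    rw [← Ideal.Quotient.eq_zero_iff_mem]
    have h0 : mkB (X j * (X j - bottF n ε j)) = 0 :=
      Ideal.Quotient.eq_zero_iff_mem.mpr (Ideal.subset_span ⟨j, rfl⟩)
    have h1 : ψ (mkB (X j * (X j - bottF n ε j))) = 0 := by rw [h0, map_zero]
    rw [map_mul, map_sub, map_mul, map_sub] at h1
    have h2 : ψ (mkB (bottF n ε j))
        = mkA (lin n (fun t => ∑ i, (if i < j then ε j i * G i t else 0))) := by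
      have hvec : (fun t => ∑ k, (if k < j then ε j k else 0) * G k t)
          = (fun t => ∑ i : Fin n, if i < j then ε j i * G i t else 0) := by
        funext t
        refine Finset.sum_congr rfl fun i _ => ?_
        split_ifs <;> simp
      rw [bottF_eq, psimk, hvec]
    rw [h2, hG j] at h1
    calc mkA (lin n (G j) * lin n (fun t => G j t - ∑ i, (if i < j then ε j i * G i t else 0)))
        = mkA (lin n (G j)) * (mkA (lin n (G j)) -
            mkA (lin n (fun t => ∑ i, (if i < j then ε j i * G i t else 0)))) := by
          rw [map_mul, lin_sub, map_sub]
      _ = 0 := h1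
  -- surjectivity onto the p-th generator
  have hsurj : ∃ d : Fin n → ℤ, ∀ t, (∑ j, d j * G j t) = (if t = p then 1 else 0) := by
    have hyp : mkA (X p) ∈ Submodule.span ℤ (Set.range fun i : Fin n => mkA (X i)) :=
      Submodule.subset_span (Set.mem_range_self p)
    rw [← hspan] at hyp
    obtain ⟨s, hs, hψs⟩ := hyp
    obtain ⟨d, hd⟩ := (Submodule.mem_span_range_iff_exists_fun ℤ).mp hs
    refine ⟨d, ?_⟩
    have hsl : s = mkB (lin n d) := by
      rw [mk_lin, ← hd]
      refine Finset.sum_congr rfl fun k _ => ?_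
      rw [zsmul_eq_mul]
    have : mkA (lin n (fun t => (∑ j, d j * G j t) - (if t = p then 1 else 0))) = 0 := by
      rw [lin_sub, map_sub, lin_single, sub_eq_zero, ← psimk, ← hsl]
      exact hψs
    have hz := key1 n A _ (Ideal.Quotient.eq_zero_iff_mem.mp this)
    intro t
    have := hz t
    omega
  -- the induction: every G j vanishes at p and q
  have step : ∀ j : Fin n, (∀ i : Fin n, i < j → G i p = 0 ∧ G i q = 0) →
      G j p = 0 ∧ G j q = 0 := by
    intro j ih
    obtain ⟨c, hc⟩ := key n A _ _ (hrel j)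
    set v := G j with hv
    set w := fun t => G j t - ∑ i, (if i < j then ε j i * G i t else 0) with hw
    have hwp : w p = v p := by
      rw [hw]
      simp only
      rw [Finset.sum_eq_zero, sub_zero]
      intro i hi
      split_ifs with h
      · rw [(ih i h).1, mul_zero]
      · rfl
    have hwq : w q = v q := by
      rw [hw]
      simp only
      rw [Finset.sum_eq_zero, sub_zero]
      intro i hi
      split_ifs with h
      · rw [(ih i h).2, mul_zero]
      · rfl
    have e1 := hc (fun t => if t = p then 1 else 0)
    have e2 := hc (fun t => if t = q then 1 else 0)
    have e3 := hc (fun t => (if t = p then 1 else 0) + (if t = q then 1 else 0))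
    simp only [mul_ite, mul_one, mul_zero, mul_add, Finset.sum_add_distrib,
      Finset.sum_ite_eq', Finset.mem_univ, if_true, ite_mul, one_mul, zero_mul,
      add_mul] at e1 e2 e3
    rw [hdiag p] at e1
    rw [hdiag q] at e2
    rw [hdiag p, hdiag q] at e3
    -- pairwise identity
    have key2 : v p * w q + v q * w p = (v p * w p) * A p q + (v q * w q) * A q p := by
      linear_combination e3 - (1 + A p q) * e1 - (1 + A q p) * e2
    rw [hwp, hwq] at key2
    have hq0 : v q = 0 := by
      have hsq : (A p q * v p - v q) ^ 2 + v q ^ 2 = 0 := by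
        linear_combination (-(A p q)) * key2 - (v q)^2 * hbad
      nlinarith [sq_nonneg (A p q * v p - v q), sq_nonneg (v q)]
    have hp0 : v p = 0 := by
      have ha : A p q ≠ 0 := by
        intro h; rw [h] at hbad; omega
      have : A p q * (v p * v p) = 0 := by
        rw [hq0] at key2
        linear_combination -key2
      have := mul_eq_zero.mp this
      rcases this with h | h
      · exact absurd h ha
      · exact mul_self_eq_zero.mp h
    exact ⟨hp0, hq0⟩
  have main : ∀ N : ℕ, ∀ j : Fin n, (j : ℕ) < N → G j p = 0 ∧ G j q = 0 := by
    intro N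
    induction N with
    | zero => intro j h; exact absurd h (Nat.not_lt_zero _)
    | succ N ih =>
      intro j hj
      exact step j (fun i hij => ih i (by
        have : (i : ℕ) < (j : ℕ) := hij
        omega))
  obtain ⟨d, hd⟩ := hsurj
  have := hd p
  rw [if_pos rfl] at this
  rw [Finset.sum_eq_zero (fun j _ => by rw [(main n j j.isLt).1, mul_zero])] at this
  exact absurd this (by omega)
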